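/- Let {w^k} be generated as follows, let w* ∈ A_s with P_{A_s}(w* − λ∇f(w*)) = {w*}, and let U be an open neighborhood of w* on which f is twice continuously differentiable such that for every J ∈ I_{w*} the restricted Hessian map w ↦ ∇²f_J(w_J) is Lipschitz continuous on U ∩ A_J and ∇²f_J(w*_J) is positive definite, where f_J(u) := f(ι_J u) is the restriction of f to the coordinates in J (ι_J denotes zero-padding embedding). Suppose there is N ∈ ℕ such that for all k ≥ N the iterates satisfy P_{A_s}(w^k) ⊆ U and are generated for some fixed t ≥ 1 by: choose w^{k,0} ∈ P_{A_s}(w^k) and J ∈ J_s with w^{k,0} ∈ A_J; for j = 0,…,t−1 set w^{k,j+1}_i = 0 for i ∉ J and w^{k,j+1}_J = w^{k,j}_J − (∇²f_J(w^{k,j}_J))^{-1} ∇f_J(w^{k,j}_J); then w^{k+1} ∈ P_{A_s}(w^{k,t} − λ∇f(w^{k,t})). If w^k → w*, then the convergence is Q-quadratic: there exist c > 0 and N′ ∈ ℕ such that ‖w^{k+1} − w*‖ ≤ c·‖w^k − w*‖² for all k ≥ N′. -/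

import Mathlib

open Filter Topology

noncomputable section

def spSet (n s : ℕ) : Set (EuclideanSpace ℝ (Fin n)) :=
  {w | (Finset.univ.filter fun i => w i ≠ 0).card ≤ s}

def projSet {n : ℕ} (A : Set (EuclideanSpace ℝ (Fin n))) (z : EuclideanSpace ℝ (Fin n)) :
    Set (EuclideanSpace ℝ (Fin n)) :=
  {y | y ∈ A ∧ ∀ x ∈ A, ‖z - y‖ ≤ ‖z - x‖}

def coordSub {n : ℕ} (J : Finset (Fin n)) : Set (EuclideanSpace ℝ (Fin n)) :=
  {w | ∀ i ∉ J, w i = 0}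

def coordRestrict {n : ℕ} (J : Finset (Fin n)) (v : EuclideanSpace ℝ (Fin n)) :
    EuclideanSpace ℝ (Fin n) :=
  (EuclideanSpace.equiv (Fin n) ℝ).symm (fun i => if i ∈ J then v i else 0)
/-- The restriction of an $n × n$ matrix to the rows and columns indexed by $J$
(representing the Hessian $∇²f_J$ of the restricted function $f_J$). -/
def hessSub {n : ℕ} (H : Matrix (Fin n) (Fin n) ℝ) (J : Finset (Fin n)) :
    Matrix {i // i ∈ J} {i // i ∈ J} ℝ :=
  fun i j => H i.1 j.1

/-- One Newton step of the restricted function $f_J$, performed in the coordinates of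
$J$ (all other coordinates are set to zero):
$x_J ← x_J - (∇²f_J(x_J))^{-1} ∇f_J(x_J)$, using $∇f_J(x_J) = (∇f(x))_J$ and
$∇²f_J(x_J)$ the corresponding submatrix of the Hessian of $f$ at $x$. -/
noncomputable def newtonStep {n : ℕ}
    (f' : EuclideanSpace ℝ (Fin n) → EuclideanSpace ℝ (Fin n))
    (Hess : EuclideanSpace ℝ (Fin n) → Matrix (Fin n) (Fin n) ℝ)
    (J : Finset (Fin n)) (x : EuclideanSpace ℝ (Fin n)) : EuclideanSpace ℝ (Fin n) :=
  (EuclideanSpace.equiv (Fin n) ℝ).symm fun i =>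
    if h : i ∈ J then
      x i - ∑ j : {i // i ∈ J}, (hessSub (Hess x) J)⁻¹ ⟨i, h⟩ j * f' x j.1
    else 0


set_option maxHeartbeats 1000000

variable {n s : ℕ}

abbrev E (n : ℕ) := EuclideanSpace ℝ (Fin n)





lemma enorm_sq (x : E n) : ‖x‖ ^ 2 = ∑ i, x i ^ 2 := by
  rw [EuclideanSpace.norm_eq, Real.sq_sqrt (by positivity)]
  simp [sq_abs]

lemma coord_abs_le (x : E n) (i : Fin n) : |x i| ≤ ‖x‖ := by
  have h1 : x i ^ 2 ≤ ‖x‖ ^ 2 := by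
    rw [enorm_sq]
    exact Finset.single_le_sum (f := fun j => x j ^ 2) (fun j _ => sq_nonneg _) (Finset.mem_univ i)
  calc |x i| = Real.sqrt (x i ^ 2) := (Real.sqrt_sq_eq_abs _).symm
    _ ≤ Real.sqrt (‖x‖ ^ 2) := Real.sqrt_le_sqrt h1
    _ = ‖x‖ := Real.sqrt_sq (norm_nonneg _)

lemma enorm_le_of_coord {x : E n} {b : ℝ} (hb : 0 ≤ b) (h : ∀ i, |x i| ≤ b) :
    ‖x‖ ≤ Real.sqrt n * b := by
  have h1 : ‖x‖ ^ 2 ≤ n * b ^ 2 := by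
    rw [enorm_sq]
    calc ∑ i, x i ^ 2 ≤ ∑ _i : Fin n, b ^ 2 := by
          refine Finset.sum_le_sum fun i _ => ?_
          have := h i; nlinarith [abs_nonneg (x i), sq_abs (x i)]
      _ = n * b ^ 2 := by simp [mul_comm]
  calc ‖x‖ = Real.sqrt (‖x‖ ^ 2) := (Real.sqrt_sq (norm_nonneg _)).symm
    _ ≤ Real.sqrt (n * b ^ 2) := Real.sqrt_le_sqrt h1
    _ = Real.sqrt n * b := by
        rw [Real.sqrt_mul (by positivity), Real.sqrt_sq hb]

noncomputable def upd (y : E n) (i : Fin n) (a : ℝ) : E n :=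
  (EuclideanSpace.equiv (Fin n) ℝ).symm (Function.update ((EuclideanSpace.equiv (Fin n) ℝ) y) i a)

lemma upd_apply (y : E n) (i : Fin n) (a : ℝ) (j : Fin n) :
    upd y i a j = if j = i then a else y j := by
  simp [upd, Function.update]

lemma norm_sub_upd_sq (z y : E n) (i : Fin n) (a : ℝ) :
    ‖z - upd y i a‖ ^ 2 = ‖z - y‖ ^ 2 - (z i - y i) ^ 2 + (z i - a) ^ 2 := by
  rw [enorm_sq, enorm_sq]
  have key : ∀ j, (z - upd y i a) j ^ 2 =
      (z - y) j ^ 2 - (if j = i then (z j - y j) ^ 2 else 0)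
        + (if j = i then (z j - a) ^ 2 else 0) := by
    intro j
    by_cases hj : j = i <;> simp [upd_apply, hj]
  simp only [key]
  rw [Finset.sum_add_distrib, Finset.sum_sub_distrib]
  simp [Finset.sum_ite_eq' Finset.univ i]

noncomputable def supp (y : E n) : Finset (Fin n) := Finset.univ.filter fun i => y i ≠ 0

lemma mem_supp {y : E n} {i : Fin n} : i ∈ supp y ↔ y i ≠ 0 := by simp [supp]

lemma mem_spSet_iff {y : E n} : y ∈ spSet n s ↔ (supp y).card ≤ s := Iff.rfl

lemma supp_upd_subset (y : E n) (i : Fin n) (a : ℝ) :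
    supp (upd y i a) ⊆ insert i (supp y) := by
  intro j hj
  rw [mem_supp, upd_apply] at hj
  by_cases hji : j = i
  · simp [hji]
  · simp only [if_neg hji] at hj
    exact Finset.mem_insert_of_mem (mem_supp.2 hj)

lemma sq_le_sq_of_norm (a b : E n) (h : ‖a‖ ≤ ‖b‖) : ‖a‖ ^ 2 ≤ ‖b‖ ^ 2 :=
  pow_le_pow_left₀ (norm_nonneg _) h 2

/-- a projection point agrees with z on its support -/
lemma proj_agree {z y : E n} (hy : y ∈ projSet (spSet n s) z) :
    ∀ i, y i ≠ 0 → y i = z i := by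
  intro i hi
  have hx : upd y i (z i) ∈ spSet n s := by
    rw [mem_spSet_iff]
    calc (supp (upd y i (z i))).card ≤ (insert i (supp y)).card :=
          Finset.card_le_card (supp_upd_subset _ _ _)
      _ = (supp y).card := by rw [Finset.insert_eq_self.2 (mem_supp.2 hi)]
      _ ≤ s := hy.1
  have h2 := sq_le_sq_of_norm _ _ (hy.2 _ hx)
  rw [norm_sub_upd_sq] at h2
  nlinarith [sq_nonneg (z i - y i)]

/-- the gradient of f vanishes on every s-superset of the support of wstar -/
lemma grad_zero {lam : ℝ} (hlam0 : 0 < lam) {f' : E n → E n} {wstar : E n}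
    (hsingleton : projSet (spSet n s) (wstar - lam • f' wstar) = {wstar})
    {J : Finset (Fin n)} (hJ : J.card = s) (hwJ : wstar ∈ coordSub J) :
    ∀ i ∈ J, f' wstar i = 0 := by
  intro i hi
  set zs := wstar - lam • f' wstar with hzs
  have hP : wstar ∈ projSet (spSet n s) zs := by rw [hsingleton]; rfl
  have hsupp : supp wstar ⊆ J := fun j hj => by
    by_contra hjJ; exact (mem_supp.1 hj) (hwJ j hjJ)
  have hx : upd wstar i (zs i) ∈ spSet n s := by
    rw [mem_spSet_iff]
    calc (supp (upd wstar i (zs i))).card ≤ (insert i (supp wstar)).card :=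
          Finset.card_le_card (supp_upd_subset _ _ _)
      _ ≤ J.card := Finset.card_le_card (Finset.insert_subset hi hsupp)
      _ = s := hJ
  have h2 := sq_le_sq_of_norm _ _ (hP.2 _ hx)
  rw [norm_sub_upd_sq] at h2
  have h3 : (zs i - wstar i) ^ 2 ≤ 0 := by nlinarith
  have h4 : zs i = wstar i := by nlinarith [sq_nonneg (zs i - wstar i)]
  have h5 : zs i = wstar i - lam * f' wstar i := by simp [hzs]
  have := h4.symm.trans h5
  have : lam * f' wstar i = 0 := by linarith
  rcases mul_eq_zero.1 this with h | h
  · linarith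
  · exact h

-- NEW MATERIAL

lemma supp_upd_zero_subset (y : E n) (j : Fin n) :
    supp (upd y j 0) ⊆ supp y \ {j} := by
  intro k hk
  rw [mem_supp, upd_apply] at hk
  by_cases hkj : k = j
  · simp [hkj] at hk
  · simp only [if_neg hkj] at hk
    simp [Finset.mem_sdiff, mem_supp, hk, hkj]

lemma grad_zero_ext {lam : ℝ} (hlam0 : 0 < lam) {f' : E n → E n} {wstar : E n}
    (hsn : s ≤ n)
    (hsingleton : projSet (spSet n s) (wstar - lam • f' wstar) = {wstar})
    (i : Fin n) (hcard : (insert i (supp wstar)).card ≤ s) : f' wstar i = 0 := by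
  obtain ⟨J, hJsub, hJcard⟩ := Finset.exists_superset_card_eq hcard (by simpa using hsn)
  refine grad_zero hlam0 hsingleton hJcard ?_ i (hJsub (Finset.mem_insert_self _ _))
  intro j hj
  by_contra h
  exact hj (hJsub (Finset.mem_insert_of_mem (mem_supp.2 h)))

lemma norm_le_of_sq (a b : E n) (c : ℝ) (hc : 0 ≤ c) (h : ‖a‖ ^ 2 ≤ c ^ 2) : ‖a‖ ≤ c := by
  nlinarith [norm_nonneg a]

lemma proj_lemma (hs1 : 1 ≤ s) (hsn : s ≤ n) {lam : ℝ} (hlam0 : 0 < lam)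
    {f' : E n → E n} {wstar : E n} (hws : wstar ∈ spSet n s)
    (hsingleton : projSet (spSet n s) (wstar - lam • f' wstar) = {wstar}) :
    ∃ ε > 0, ∀ z y, y ∈ projSet (spSet n s) z → ‖z - (wstar - lam • f' wstar)‖ < ε →
      ‖y - wstar‖ ≤ ‖z - (wstar - lam • f' wstar)‖ := by
  set zs := wstar - lam • f' wstar with hzs
  set S := supp wstar with hS
  have hScard : S.card ≤ s := mem_spSet_iff.1 hws
  have hwP : wstar ∈ projSet (spSet n s) zs := by rw [hsingleton]; rfl
  -- F1 : gradient vanishes on support, so zs = wstar on S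
  have hF1 : ∀ i ∈ S, f' wstar i = 0 := by
    intro i hi
    refine grad_zero_ext hlam0 hsn hsingleton i ?_
    rwa [Finset.insert_eq_self.2 hi]
  have hzsS : ∀ i ∈ S, zs i = wstar i := by
    intro i hi
    have : zs i = wstar i - lam * f' wstar i := by simp [hzs]
    rw [this, hF1 i hi]; ring
  -- F2 : if card < s then gradient is zero everywhere, so zs = 0 off S
  have hF2 : S.card < s → ∀ i ∉ S, zs i = 0 := by
    intro hlt i hi
    have hf : f' wstar i = 0 := by
      refine grad_zero_ext hlam0 hsn hsingleton i ?_
      calc (insert i S).card ≤ S.card + 1 := Finset.card_insert_le _ _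
        _ ≤ s := hlt
    have : zs i = wstar i - lam * f' wstar i := by simp [hzs]
    have hw0 : wstar i = 0 := by
      by_contra h; exact hi (mem_supp.2 h)
    rw [this, hf, hw0]; ring
  -- gap constant m
  obtain ⟨m, hm0, hmle, hgap⟩ :
      ∃ m > 0, (∀ i ∈ S, m ≤ |wstar i|) ∧ (∀ j ∉ S, |zs j| < m) := by
    rcases S.eq_empty_or_nonempty with hSe | hSne
    · have hlt : S.card < s := by rw [hSe]; simpa using Nat.lt_of_succ_le hs1
      refine ⟨1, one_pos, ?_, ?_⟩
      · intro i hi; rw [hSe] at hi; simp at hi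
      · intro j hj; rw [hF2 hlt j hj]; norm_num
    · obtain ⟨i₀, hi₀S, hi₀min⟩ := S.exists_min_image (fun i => |wstar i|) hSne
      have hi₀pos : 0 < |wstar i₀| := abs_pos.2 (mem_supp.1 hi₀S)
      refine ⟨|wstar i₀|, hi₀pos, hi₀min, ?_⟩
      intro j hj
      rcases lt_or_eq_of_le hScard with hlt | heq
      · rw [hF2 hlt j hj]; simpa using hi₀pos
      · by_contra hge
        push_neg at hge
        have hji : j ≠ i₀ := fun h => hj (h ▸ hi₀S)
        set x := upd (upd wstar i₀ 0) j (zs j) with hx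
        have hcard1 : (supp (upd wstar i₀ 0)).card ≤ S.card - 1 := by
          have h1 := Finset.card_le_card (supp_upd_zero_subset wstar i₀)
          rwa [Finset.sdiff_singleton_eq_erase, Finset.card_erase_of_mem hi₀S] at h1
        have hxS : x ∈ spSet n s := by
          rw [mem_spSet_iff]
          calc (supp x).card ≤ (insert j (supp (upd wstar i₀ 0))).card :=
                Finset.card_le_card (supp_upd_subset _ _ _)
            _ ≤ (supp (upd wstar i₀ 0)).card + 1 := Finset.card_insert_le _ _
            _ ≤ (S.card - 1) + 1 := by omega
            _ ≤ s := by
                have : 1 ≤ S.card := Finset.card_pos.2 hSne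
                omega
        have e1 : (upd wstar i₀ 0) j = 0 := by
          rw [upd_apply, if_neg hji]
          by_contra h; exact hj (mem_supp.2 h)
        have e2 : zs i₀ = wstar i₀ := hzsS i₀ hi₀S
        have h1 : ‖zs - x‖ ^ 2 = ‖zs - wstar‖ ^ 2 + wstar i₀ ^ 2 - zs j ^ 2 := by
          rw [hx, norm_sub_upd_sq, norm_sub_upd_sq, e1, e2]
          ring
        have hsqle : wstar i₀ ^ 2 ≤ zs j ^ 2 := by
          have := pow_le_pow_left₀ (abs_nonneg _) hge 2
          rwa [sq_abs, sq_abs] at this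
        have hle : ‖zs - x‖ ≤ ‖zs - wstar‖ := by
          refine norm_le_of_sq _ (zs - wstar) _ (norm_nonneg _) ?_
          rw [h1]; linarith
        have hxP : x ∈ projSet (spSet n s) zs :=
          ⟨hxS, fun u hu => le_trans hle (hwP.2 u hu)⟩
        rw [hsingleton, Set.mem_singleton_iff] at hxP
        have : x i₀ = 0 := by
          rw [hx, upd_apply, if_neg (Ne.symm hji), upd_apply, if_pos rfl]
        rw [hxP] at this
        exact (mem_supp.1 hi₀S) this
  -- upper bound M off the support
  obtain ⟨M, hM0, hMz, hMlt⟩ : ∃ M, 0 ≤ M ∧ (∀ j ∉ S, |zs j| ≤ M) ∧ M < m := by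
    rcases Sᶜ.eq_empty_or_nonempty with hc | hc
    · refine ⟨0, le_refl _, fun j hj => absurd (Finset.mem_compl.2 hj) (by simp [hc]), hm0⟩
    · obtain ⟨j₀, hj₀, hj₀max⟩ := Sᶜ.exists_max_image (fun j => |zs j|) hc
      exact ⟨|zs j₀|, abs_nonneg _, fun j hj => hj₀max j (Finset.mem_compl.2 hj),
        hgap j₀ (Finset.mem_compl.1 hj₀)⟩
  refine ⟨(m - M) / 2, by linarith, ?_⟩
  intro z y hy hz
  set ε := (m - M) / 2 with hε
  have hzc : ∀ i, |z i - zs i| < ε := by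
    intro i
    have h1 : (z - zs) i = z i - zs i := by simp
    calc |z i - zs i| = |(z - zs) i| := by rw [h1]
      _ ≤ ‖z - zs‖ := coord_abs_le _ _
      _ < ε := hz
  -- lower bound on |z i| for i ∈ S
  have hzS : ∀ i ∈ S, m - ε < |z i| := by
    intro i hi
    have h1 : m ≤ |zs i| := by rw [hzsS i hi]; exact hmle i hi
    have h2 := hzc i
    have := abs_sub_abs_le_abs_sub (zs i) (z i)
    rw [abs_sub_comm] at this
    linarith [abs_sub_abs_le_abs_sub (z i) (zs i), neg_abs_le (z i - zs i)]
  have hzoff : ∀ j ∉ S, |z j| < m - ε := by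
    intro j hj
    have h1 := hMz j hj
    have h2 := hzc j
    have h3 : M + ε = m - ε := by rw [hε]; ring
    calc |z j| ≤ |zs j| + |z j - zs j| := by
          have := abs_sub_abs_le_abs_sub (z j) (zs j); linarith [abs_add_le (zs j) (z j - zs j)]
      _ < M + ε := by linarith
      _ = m - ε := h3
  have hmε : 0 < m - ε := by rw [hε]; linarith
  -- S ⊆ supp y
  have hSsub : S ⊆ supp y := by
    intro i hiS
    by_contra hiy
    have hyi0 : y i = 0 := by by_contra h; exact hiy (mem_supp.2 h)
    have hzi0 : z i ≠ 0 := by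
      have := hzS i hiS
      intro h; rw [h] at this; simp at this; linarith
    rcases lt_or_eq_of_le (mem_spSet_iff.1 hy.1) with hlt | heq
    · have hxS : upd y i (z i) ∈ spSet n s := by
        rw [mem_spSet_iff]
        calc (supp (upd y i (z i))).card ≤ (insert i (supp y)).card :=
              Finset.card_le_card (supp_upd_subset _ _ _)
          _ ≤ (supp y).card + 1 := Finset.card_insert_le _ _
          _ ≤ s := hlt
      have h2 := sq_le_sq_of_norm _ _ (hy.2 _ hxS)
      rw [norm_sub_upd_sq, hyi0] at h2
      exact hzi0 (by nlinarith [sq_nonneg (z i)])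
    · -- swap case
      have hex : ∃ j ∈ supp y, j ∉ S := by
        by_contra h
        push_neg at h
        have hsub : supp y ⊆ S := h
        have : supp y = S := Finset.eq_of_subset_of_card_le hsub (by omega)
        rw [← this] at hiS
        exact hiy hiS
      obtain ⟨j, hjy, hjS⟩ := hex
      have hyj : y j = z j := proj_agree hy j (mem_supp.1 hjy)
      have hij : i ≠ j := fun h => hjS (h ▸ hiS)
      set x := upd (upd y j 0) i (z i) with hx
      have hcard1 : (supp (upd y j 0)).card ≤ (supp y).card - 1 := by
        have h1 := Finset.card_le_card (supp_upd_zero_subset y j)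
        rwa [Finset.sdiff_singleton_eq_erase, Finset.card_erase_of_mem hjy] at h1
      have hxS : x ∈ spSet n s := by
        rw [mem_spSet_iff]
        calc (supp x).card ≤ (insert i (supp (upd y j 0))).card :=
              Finset.card_le_card (supp_upd_subset _ _ _)
          _ ≤ (supp (upd y j 0)).card + 1 := Finset.card_insert_le _ _
          _ ≤ ((supp y).card - 1) + 1 := by omega
          _ ≤ s := by
              have : 1 ≤ (supp y).card := Finset.card_pos.2 ⟨j, hjy⟩
              omega
      have e1 : (upd y j 0) i = 0 := by rw [upd_apply, if_neg hij, hyi0]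
      have h2 := sq_le_sq_of_norm _ _ (hy.2 _ hxS)
      have h3 : ‖z - x‖ ^ 2 = ‖z - y‖ ^ 2 + z j ^ 2 - z i ^ 2 := by
        rw [hx, norm_sub_upd_sq, norm_sub_upd_sq, e1, hyj]
        ring
      have hzj : |z j| < |z i| := lt_trans (hzoff j hjS) (hzS i hiS)
      have hsqlt : z j ^ 2 < z i ^ 2 := by
        have := pow_lt_pow_left₀ hzj (abs_nonneg _) two_ne_zero
        rwa [sq_abs, sq_abs] at this
      rw [h3] at h2
      linarith
  -- the off-support coordinates of zs vanish wherever y is nonzero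
  have hoff : ∀ i, i ∉ S → y i ≠ 0 → zs i = 0 := by
    intro i hiS hyi
    rcases lt_or_eq_of_le hScard with hlt | heq
    · exact hF2 hlt i hiS
    · exfalso
      have hcard2 : (supp y).card ≤ S.card := by rw [heq]; exact mem_spSet_iff.1 hy.1
      have : supp y = S := (Finset.eq_of_subset_of_card_le hSsub hcard2).symm
      exact hiS (this ▸ mem_supp.2 hyi)
  -- final computation
  have hterm : ∀ i, (y i - wstar i) ^ 2 ≤ (z i - zs i) ^ 2 := by
    intro i
    by_cases hyi : y i = 0
    · have hiS : i ∉ S := fun h => (mem_supp.1 (hSsub h)) hyi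
      have hwi : wstar i = 0 := by by_contra h; exact hiS (mem_supp.2 h)
      rw [hyi, hwi]
      simpa using sq_nonneg (z i - zs i)
    · have hyz := proj_agree hy i hyi
      by_cases hiS : i ∈ S
      · rw [hyz, hzsS i hiS]
      · rw [hyz, hoff i hiS hyi]
        have hwi : wstar i = 0 := by by_contra h; exact hiS (mem_supp.2 h)
        rw [hwi]
  have hfin : ‖y - wstar‖ ^ 2 ≤ ‖z - zs‖ ^ 2 := by
    rw [enorm_sq, enorm_sq]
    refine Finset.sum_le_sum fun i _ => ?_
    have e1 : (y - wstar) i = y i - wstar i := by simp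
    have e2 : (z - zs) i = z i - zs i := by simp
    rw [e1, e2]
    exact hterm i
  exact norm_le_of_sq _ (z - zs) _ (norm_nonneg _) hfin

/-- Step 2: invertibility and entrywise bound of the inverse sub-Hessian near wstar. -/
lemma inv_bound (Hess : E n → Matrix (Fin n) (Fin n) ℝ)
    (U : Set (E n)) (wstar : E n) (hwU : wstar ∈ U)
    (J : Finset (Fin n)) (hwJ : wstar ∈ coordSub J)
    (K : ℝ) (hK : ∀ u ∈ U ∩ coordSub J, ∀ v ∈ U ∩ coordSub J,
        ∀ i ∈ J, ∀ j ∈ J, |Hess u i j - Hess v i j| ≤ K * ‖u - v‖)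
    (hPD : (hessSub (Hess wstar) J).PosDef)
    (r0 : ℝ) (hr0 : 0 < r0) (hball : Metric.ball wstar r0 ⊆ U) :
    ∃ r1 > 0, r1 ≤ r0 ∧ ∃ B ≥ 1,
      ∀ x ∈ Metric.ball wstar r1 ∩ coordSub J,
        IsUnit (hessSub (Hess x) J).det ∧
        ∀ p q, |(hessSub (Hess x) J)⁻¹ p q| ≤ B := by
  classical
  set T : Set (E n) := Metric.ball wstar r0 ∩ coordSub J with hT
  have hwT : wstar ∈ T := ⟨Metric.mem_ball_self hr0, hwJ⟩
  set φ : E n → Matrix {i // i ∈ J} {i // i ∈ J} ℝ := fun x => hessSub (Hess x) J with hφ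
  have hφcont : ContinuousWithinAt φ T wstar := by
    refine continuousWithinAt_pi.2 ?_
    intro p
    rw [continuousWithinAt_pi]
    intro q
    -- the entry map is Lipschitz on T
    have hlip : ∀ x ∈ T, dist (Hess x p.1 q.1) (Hess wstar p.1 q.1) ≤ |K| * dist x wstar := by
      intro x hx
      have h1 := hK x ⟨hball hx.1, hx.2⟩ wstar ⟨hwU, hwJ⟩ p.1 p.2 q.1 q.2
      rw [Real.dist_eq, dist_eq_norm]
      calc |Hess x p.1 q.1 - Hess wstar p.1 q.1| ≤ K * ‖x - wstar‖ := h1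
        _ ≤ |K| * ‖x - wstar‖ := by
            have := le_abs_self K
            nlinarith [norm_nonneg (x - wstar)]
    have hdist : Tendsto (fun x : E n => |K| * dist x wstar) (𝓝[T] wstar) (𝓝 0) := by
      have h1 : ContinuousWithinAt (fun x : E n => |K| * dist x wstar) T wstar :=
        ((continuous_const.mul (continuous_id.dist continuous_const)).continuousWithinAt)
      have h2 : |K| * dist wstar wstar = 0 := by simp
      rw [ContinuousWithinAt] at h1
      rwa [h2] at h1
    have : Tendsto (fun x => Hess x p.1 q.1) (nhdsWithin wstar T) (nhds (Hess wstar p.1 q.1)) := by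
      rw [tendsto_iff_dist_tendsto_zero]
      exact squeeze_zero' (Filter.Eventually.of_forall fun x => dist_nonneg)
        (eventually_nhdsWithin_of_forall hlip) hdist
    exact this
  -- inverse is continuous within T at wstar
  have hdet0 : (φ wstar).det ≠ 0 := ne_of_gt hPD.det_pos
  have hinvcont : ContinuousWithinAt (fun x => (φ x)⁻¹) T wstar := by
    have h1 : ContinuousAt Inv.inv (φ wstar) := by
      refine continuousAt_matrix_inv _ ?_
      have : ContinuousAt (fun a : ℝ => a⁻¹) (φ wstar).det := continuousAt_inv₀ hdet0
      simpa [Ring.inverse_eq_inv'] using this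
    exact h1.comp_continuousWithinAt hφcont
  -- eventual bound on the entries of the inverse
  set B : ℝ := (∑ p : {i // i ∈ J}, ∑ q : {i // i ∈ J}, |(φ wstar)⁻¹ p q|) + 1 with hB
  have hB1 : 1 ≤ B := by
    rw [hB]
    have h : (0:ℝ) ≤ ∑ p : {i // i ∈ J}, ∑ q : {i // i ∈ J}, |(φ wstar)⁻¹ p q| :=
      Finset.sum_nonneg fun p _ => Finset.sum_nonneg fun q _ => abs_nonneg _
    linarith
  have hsumcont : Tendsto (fun x => ∑ p : {i // i ∈ J}, ∑ q : {i // i ∈ J}, |(φ x)⁻¹ p q|)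
      (𝓝[T] wstar) (𝓝 (∑ p : {i // i ∈ J}, ∑ q : {i // i ∈ J}, |(φ wstar)⁻¹ p q|)) := by
    refine tendsto_finset_sum _ fun p _ => ?_
    refine tendsto_finset_sum _ fun q _ => ?_
    refine Filter.Tendsto.abs ?_
    have heval : Continuous (fun M : Matrix {i // i ∈ J} {i // i ∈ J} ℝ => M p q) :=
      (continuous_apply q).comp (continuous_apply p)
    exact heval.continuousAt.comp_continuousWithinAt hinvcont
  have hev1 : ∀ᶠ x in 𝓝[T] wstar,
      (∑ p : {i // i ∈ J}, ∑ q : {i // i ∈ J}, |(φ x)⁻¹ p q|) < B := by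
    refine hsumcont.eventually_lt_const ?_
    rw [hB]; linarith
  have hdetcont : Tendsto (fun x => (φ x).det) (𝓝[T] wstar) (𝓝 (φ wstar).det) :=
    (Continuous.matrix_det continuous_id).continuousAt.comp_continuousWithinAt hφcont
  have hev2 : ∀ᶠ x in 𝓝[T] wstar, (φ x).det ≠ 0 := hdetcont.eventually_ne hdet0
  have hev := hev1.and hev2
  have hev' := hev
  rw [Filter.eventually_iff, Metric.mem_nhdsWithin_iff] at hev'
  obtain ⟨δ, hδ0, hδ⟩ := hev'
  refine ⟨min δ r0, lt_min hδ0 hr0, min_le_right _ _, B, hB1, ?_⟩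
  rintro x ⟨hx1, hx2⟩
  have hxT : x ∈ T := ⟨Metric.ball_subset_ball (min_le_right δ r0) hx1, hx2⟩
  have hxδ : dist x wstar < δ := lt_of_lt_of_le (Metric.mem_ball.1 hx1) (min_le_left _ _)
  obtain ⟨hlt, hne⟩ := hδ ⟨Metric.mem_ball.2 hxδ, hxT⟩
  refine ⟨isUnit_iff_ne_zero.2 hne, fun p q => ?_⟩
  calc |(φ x)⁻¹ p q| ≤ ∑ p' : {i // i ∈ J}, ∑ q' : {i // i ∈ J}, |(φ x)⁻¹ p' q'| := by
        refine Finset.single_le_sum (f := fun p' => ∑ q' : {i // i ∈ J}, |(φ x)⁻¹ p' q'|)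
          (fun _ _ => by positivity) (Finset.mem_univ p) |>.trans' ?_
        exact Finset.single_le_sum (f := fun q' => |(φ x)⁻¹ p q'|)
          (fun _ _ => abs_nonneg _) (Finset.mem_univ q)
    _ ≤ B := le_of_lt hlt

lemma taylor_bound
    (f' : E n → E n) (Hess : E n → Matrix (Fin n) (Fin n) ℝ)
    (U : Set (E n)) (wstar : E n)
    (hHess : ∀ x ∈ U, HasFDerivAt f'
      (LinearMap.toContinuousLinearMap (Matrix.toEuclideanLin (Hess x))) x)
    (J : Finset (Fin n)) (hwJ : wstar ∈ coordSub J)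
    (K : ℝ) (hK0 : 0 ≤ K)
    (hK : ∀ u ∈ U ∩ coordSub J, ∀ v ∈ U ∩ coordSub J,
        ∀ i ∈ J, ∀ j ∈ J, |Hess u i j - Hess v i j| ≤ K * ‖u - v‖)
    (r : ℝ) (hball : Metric.ball wstar r ⊆ U)
    (x : E n) (hx : x ∈ Metric.ball wstar r ∩ coordSub J)
    (j : Fin n) (hj : j ∈ J) :
    |f' x j - f' wstar j - (Hess x).mulVec (fun i => x i - wstar i) j|
      ≤ (K * n) * ‖x - wstar‖ ^ 2 := by
  classical
  set d : E n := x - wstar with hd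
  set dd : Fin n → ℝ := fun i => x i - wstar i with hdd
  have hddd : ∀ i, d i = dd i := fun i => by simp [hd, hdd]
  have hdnorm : ‖d‖ < r := by
    rw [hd, ← dist_eq_norm]
    exact Metric.mem_ball.1 hx.1
  set c : ℝ := (Hess x).mulVec dd j with hc
  set u : ℝ → E n := fun θ => wstar + θ • d with hu
  have humem : ∀ θ ∈ Set.Icc (0:ℝ) 1, u θ ∈ Metric.ball wstar r ∩ coordSub J := by
    intro θ hθ
    constructor
    · rw [Metric.mem_ball, dist_eq_norm]
      have : u θ - wstar = θ • d := by rw [hu]; exact add_sub_cancel_left wstar _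
      rw [this, norm_smul]
      have h1 : ‖θ‖ ≤ 1 := by
        rw [Real.norm_eq_abs, abs_le]; exact ⟨by linarith [hθ.1], hθ.2⟩
      calc ‖θ‖ * ‖d‖ ≤ 1 * ‖d‖ := by nlinarith [norm_nonneg d]
        _ < r := by rw [one_mul]; exact hdnorm
    · intro i hi
      have h1 : wstar i = 0 := hwJ i hi
      have h2 : x i = 0 := hx.2 i hi
      have : u θ i = wstar i + θ * d i := by simp [hu]
      rw [this, h1, hddd, hdd]; simp [h1, h2]
  have huU : ∀ θ ∈ Set.Icc (0:ℝ) 1, u θ ∈ U := fun θ hθ => hball (humem θ hθ).1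
  have hux : ∀ θ ∈ Set.Icc (0:ℝ) 1, ‖u θ - x‖ ≤ ‖d‖ := by
    intro θ hθ
    have : u θ - x = (θ - 1) • d := by
      rw [hu]
      have : x = wstar + d := by rw [hd]; abel
      rw [this]; module
    rw [this, norm_smul, Real.norm_eq_abs]
    have h1 : |θ - 1| ≤ 1 := by rw [abs_le]; exact ⟨by linarith [hθ.1], by linarith [hθ.2]⟩
    nlinarith [norm_nonneg d]
  set g : ℝ → ℝ := fun θ => f' (u θ) j - θ * c with hg
  set g' : ℝ → ℝ := fun θ => (Hess (u θ)).mulVec dd j - c with hg'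
  have hgderiv : ∀ θ ∈ Set.Icc (0:ℝ) 1, HasDerivWithinAt g (g' θ) (Set.Icc 0 1) θ := by
    intro θ hθ
    have hd1 : HasDerivAt u d θ := by
      have h1 : HasDerivAt (fun θ : ℝ => θ • d) ((1:ℝ) • d) θ := (hasDerivAt_id θ).smul_const d
      have h2 := h1.const_add wstar
      simpa [hu] using h2
    have hd2 := (hHess (u θ) (huU θ hθ)).comp_hasDerivAt θ hd1
    have hd3 := (EuclideanSpace.proj (𝕜 := ℝ) j).hasFDerivAt.comp_hasDerivAt θ hd2
    have heval : (EuclideanSpace.proj (𝕜 := ℝ) j)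
        ((LinearMap.toContinuousLinearMap (Matrix.toEuclideanLin (Hess (u θ)))) d)
          = (Hess (u θ)).mulVec dd j := by
      simp [Matrix.toEuclideanLin_apply]
      congr 1
    have hd4 : HasDerivAt (fun θ : ℝ => θ * c) c θ := hasDerivAt_mul_const c
    have := (hd3.sub hd4)
    rw [heval] at this
    exact this.hasDerivWithinAt
  have hbound : ∀ θ ∈ Set.Icc (0:ℝ) 1, ‖g' θ‖ ≤ (K * n) * ‖d‖ ^ 2 := by
    intro θ hθ
    have hexp : g' θ = ∑ i, (Hess (u θ) j i - Hess x j i) * dd i := by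
      rw [hg', hc]
      simp [Matrix.mulVec, dotProduct, ← Finset.sum_sub_distrib, sub_mul]
    rw [Real.norm_eq_abs, hexp]
    calc |∑ i, (Hess (u θ) j i - Hess x j i) * dd i|
        ≤ ∑ i, |(Hess (u θ) j i - Hess x j i) * dd i| := Finset.abs_sum_le_sum_abs _ _
      _ ≤ ∑ _i : Fin n, K * ‖d‖ ^ 2 := by
          refine Finset.sum_le_sum fun i _ => ?_
          by_cases hi : i ∈ J
          · have h1 := hK (u θ) ⟨huU θ hθ, (humem θ hθ).2⟩ x ⟨hball hx.1, hx.2⟩ j hj i hi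
            have h2 : |dd i| ≤ ‖d‖ := by rw [← hddd]; exact coord_abs_le d i
            have h3 := hux θ hθ
            rw [abs_mul]
            have h4 : |Hess (u θ) j i - Hess x j i| ≤ K * ‖d‖ :=
              le_trans h1 (by nlinarith [norm_nonneg (u θ - x), norm_nonneg d])
            calc |Hess (u θ) j i - Hess x j i| * |dd i| ≤ (K * ‖d‖) * ‖d‖ := by
                  have := abs_nonneg (Hess (u θ) j i - Hess x j i)
                  nlinarith [abs_nonneg (dd i), norm_nonneg d]
              _ = K * ‖d‖ ^ 2 := by ring
          · have : dd i = 0 := by rw [hdd]; simp [hx.2 i hi, hwJ i hi]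
            rw [this, mul_zero, abs_zero]
            positivity
      _ = (K * n) * ‖d‖ ^ 2 := by
          rw [Finset.sum_const, Finset.card_univ, Fintype.card_fin]
          simp [nsmul_eq_mul]; ring
  have hmvt := Convex.norm_image_sub_le_of_norm_hasDerivWithin_le hgderiv hbound
    (convex_Icc 0 1) (Set.left_mem_Icc.2 zero_le_one) (Set.right_mem_Icc.2 zero_le_one)
  have hg1 : g 1 = f' x j - c := by
    have h1 : u 1 = x := by rw [hu]; simp [hd]
    simp only [hg, h1, one_mul]
  have hg0 : g 0 = f' wstar j := by
    have h1 : u 0 = wstar := by rw [hu]; simp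
    simp only [hg, h1, zero_mul, sub_zero]
  rw [hg1, hg0] at hmvt
  have : ‖(1:ℝ) - 0‖ = 1 := by norm_num
  rw [this, mul_one] at hmvt
  rw [Real.norm_eq_abs] at hmvt
  have heq : f' x j - f' wstar j - (Hess x).mulVec (fun i => x i - wstar i) j
      = f' x j - c - f' wstar j := by rw [hc, hdd]; ring
  rw [heq]
  exact hmvt

lemma newtonStep_apply_mem (f' : E n → E n) (Hess : E n → Matrix (Fin n) (Fin n) ℝ)
    (J : Finset (Fin n)) (x : E n) (i : Fin n) (h : i ∈ J) :
    newtonStep f' Hess J x i =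
      x i - ∑ j : {i // i ∈ J}, (hessSub (Hess x) J)⁻¹ ⟨i, h⟩ j * f' x j.1 := by
  simp [newtonStep, h]

lemma newtonStep_apply_not_mem (f' : E n → E n) (Hess : E n → Matrix (Fin n) (Fin n) ℝ)
    (J : Finset (Fin n)) (x : E n) (i : Fin n) (h : i ∉ J) :
    newtonStep f' Hess J x i = 0 := by
  simp [newtonStep, h]

lemma newton_lemma (hsn : s ≤ n)
    (f' : E n → E n) (Hess : E n → Matrix (Fin n) (Fin n) ℝ)
    (U : Set (E n)) (hU : IsOpen U) (wstar : E n) (hwU : wstar ∈ U)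
    (hHess : ∀ x ∈ U, HasFDerivAt f'
      (LinearMap.toContinuousLinearMap (Matrix.toEuclideanLin (Hess x))) x)
    (J : Finset (Fin n)) (hwJ : wstar ∈ coordSub J)
    (K : ℝ) (hK0 : 0 ≤ K)
    (hK : ∀ u ∈ U ∩ coordSub J, ∀ v ∈ U ∩ coordSub J,
        ∀ i ∈ J, ∀ j ∈ J, |Hess u i j - Hess v i j| ≤ K * ‖u - v‖)
    (hPD : (hessSub (Hess wstar) J).PosDef)
    (hgz : ∀ i ∈ J, f' wstar i = 0) :
    ∃ r > 0, ∃ C > 0, Metric.ball wstar r ⊆ U ∧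
      ∀ x ∈ Metric.ball wstar r ∩ coordSub J,
        newtonStep f' Hess J x ∈ coordSub J ∧
        ‖newtonStep f' Hess J x - wstar‖ ≤ C * ‖x - wstar‖ ^ 2 := by
  classical
  obtain ⟨r0, hr0, hball0⟩ := Metric.isOpen_iff.1 hU wstar hwU
  obtain ⟨r1, hr1, hr10, B, hB1, hinv⟩ :=
    inv_bound Hess U wstar hwU J hwJ K hK hPD r0 hr0 hball0
  have hball1 : Metric.ball wstar r1 ⊆ U :=
    fun x hx => hball0 (Metric.ball_subset_ball hr10 hx)
  set C : ℝ := Real.sqrt n * (n * B * (K * n)) + 1 with hC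
  have hCpos : 0 < C := by
    have h1 : (0:ℝ) ≤ Real.sqrt n * (n * B * (K * n)) := by positivity
    rw [hC]; linarith
  refine ⟨r1, hr1, C, hCpos, hball1, ?_⟩
  rintro x ⟨hx1, hx2⟩
  set d : E n := x - wstar with hd
  set dd : Fin n → ℝ := fun i => x i - wstar i with hdd
  set Hx := hessSub (Hess x) J with hHx
  obtain ⟨hunit, hBent⟩ := hinv x ⟨hx1, hx2⟩
  set dJ : {i // i ∈ J} → ℝ := fun p => dd p.1 with hdJ
  set rres : {i // i ∈ J} → ℝ := fun p => f' x p.1 - Hx.mulVec dJ p with hrres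
  -- subtype mulVec equals full mulVec
  have hmv : ∀ p : {i // i ∈ J}, Hx.mulVec dJ p = (Hess x).mulVec dd p.1 := by
    intro p
    rw [Matrix.mulVec, Matrix.mulVec, dotProduct, dotProduct]
    have h1 : ∑ q : {i // i ∈ J}, Hx p q * dJ q
        = ∑ i ∈ J, Hess x p.1 i * dd i := by
      rw [← Finset.sum_coe_sort J (fun i => Hess x p.1 i * dd i)]
      rfl
    rw [h1]
    refine Finset.sum_subset (Finset.subset_univ J) fun i _ hi => ?_
    have : dd i = 0 := by rw [hdd]; simp [hx2 i hi, hwJ i hi]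
    rw [this, mul_zero]
  -- taylor bound on the residual
  have hres : ∀ p : {i // i ∈ J}, |rres p| ≤ (K * n) * ‖d‖ ^ 2 := by
    intro p
    have h1 := taylor_bound f' Hess U wstar hHess J hwJ K hK0 hK r1 hball1 x ⟨hx1, hx2⟩
      p.1 p.2
    rw [hgz p.1 p.2, sub_zero] at h1
    have h2 : rres p = f' x p.1 - (Hess x).mulVec dd p.1 := by simp only [hrres]; rw [hmv p]
    rw [h2, hd]
    exact h1
  -- the Newton identity
  have hkey : ∀ (i : Fin n) (h : i ∈ J),
      newtonStep f' Hess J x i - wstar i = -(Hx⁻¹.mulVec rres ⟨i, h⟩) := by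
    intro i h
    rw [newtonStep_apply_mem f' Hess J x i h]
    have hsplit : ∑ j : {i // i ∈ J}, (hessSub (Hess x) J)⁻¹ ⟨i, h⟩ j * f' x j.1
        = Hx⁻¹.mulVec (Hx.mulVec dJ) ⟨i, h⟩ + Hx⁻¹.mulVec rres ⟨i, h⟩ := by
      rw [Matrix.mulVec, Matrix.mulVec, dotProduct, dotProduct,
        ← Finset.sum_add_distrib]
      refine Finset.sum_congr rfl fun q _ => ?_
      have : f' x q.1 = Hx.mulVec dJ q + rres q := by simp only [hrres]; ring
      rw [← hHx, this]; ring
    have hid : Hx⁻¹.mulVec (Hx.mulVec dJ) = dJ := by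
      rw [Matrix.mulVec_mulVec, Matrix.nonsing_inv_mul Hx hunit, Matrix.one_mulVec]
    rw [hsplit, hid]
    have : dJ ⟨i, h⟩ = x i - wstar i := by simp only [hdJ, hdd]
    rw [this]; ring
  -- coordinate bound
  set b : ℝ := (n * B * (K * n)) * ‖d‖ ^ 2 with hb
  have hbnn : 0 ≤ b := by rw [hb]; positivity
  have hcoord : ∀ i, |(newtonStep f' Hess J x - wstar) i| ≤ b := by
    intro i
    have happ : (newtonStep f' Hess J x - wstar) i = newtonStep f' Hess J x i - wstar i := by
      simp
    rw [happ]
    by_cases h : i ∈ J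
    · rw [hkey i h, abs_neg]
      calc |Hx⁻¹.mulVec rres ⟨i, h⟩| ≤ ∑ q : {i // i ∈ J}, |Hx⁻¹ ⟨i, h⟩ q| * |rres q| := by
            rw [Matrix.mulVec, dotProduct]
            refine le_trans (Finset.abs_sum_le_sum_abs _ _) ?_
            refine Finset.sum_le_sum fun q _ => ?_
            rw [abs_mul]
        _ ≤ ∑ _q : {i // i ∈ J}, B * ((K * n) * ‖d‖ ^ 2) := by
            refine Finset.sum_le_sum fun q _ => ?_
            have h1 := hBent ⟨i, h⟩ q
            have h2 := hres q
            have h3 : (0:ℝ) ≤ (K * n) * ‖d‖ ^ 2 := by positivity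
            nlinarith [abs_nonneg (Hx⁻¹ ⟨i, h⟩ q), abs_nonneg (rres q)]
        _ ≤ b := by
            rw [Finset.sum_const, Finset.card_univ, Fintype.card_coe, hb, nsmul_eq_mul]
            have hJn : (J.card : ℝ) ≤ n := by
              have := Finset.card_le_card (Finset.subset_univ J)
              rw [Finset.card_univ, Fintype.card_fin] at this
              exact_mod_cast this
            have h4 : (0:ℝ) ≤ B * ((K * n) * ‖d‖ ^ 2) := by positivity
            have h5 : (0:ℝ) ≤ ‖d‖ ^ 2 := by positivity
            nlinarith [hB1, hK0, sq_nonneg ‖d‖]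
    · rw [newtonStep_apply_not_mem f' Hess J x i h, hwJ i h, sub_zero, abs_zero]
      exact hbnn
  constructor
  · intro i hi
    exact newtonStep_apply_not_mem f' Hess J x i hi
  · calc ‖newtonStep f' Hess J x - wstar‖ ≤ Real.sqrt n * b := enorm_le_of_coord hbnn hcoord
      _ = (Real.sqrt n * (n * B * (K * n))) * ‖d‖ ^ 2 := by rw [hb]; ring
      _ ≤ C * ‖d‖ ^ 2 := by
          have h5 : (0:ℝ) ≤ ‖d‖ ^ 2 := by positivity
          rw [hC]; nlinarith
      _ = C * ‖x - wstar‖ ^ 2 := by rw [hd]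

lemma proj_dist {A : Set (E n)} {z y w : E n} (hy : y ∈ projSet A z) (hw : w ∈ A) :
    ‖y - w‖ ≤ 2 * ‖z - w‖ := by
  have h1 : ‖y - w‖ ≤ ‖y - z‖ + ‖z - w‖ := by
    have h : y - w = (y - z) + (z - w) := by abel
    rw [h]; exact norm_add_le _ _
  have h2 : ‖y - z‖ ≤ ‖z - w‖ := by
    rw [norm_sub_rev]; exact hy.2 w hw
  linarith


/-- Q-quadratic convergence of the two-stage scheme alternating $t$
Newton steps on the identified subspace with one projected gradient step. -/
theorem stmt19 {n s : ℕ} (hs1 : 1 ≤ s) (hsn : s ≤ n)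
    (f : EuclideanSpace ℝ (Fin n) → ℝ)
    (f' : EuclideanSpace ℝ (Fin n) → EuclideanSpace ℝ (Fin n))
    (Hess : EuclideanSpace ℝ (Fin n) → Matrix (Fin n) (Fin n) ℝ)
    (L lam : ℝ) (hL : 0 < L)
    (hconv : ConvexOn ℝ Set.univ f)
    (hgrad : ∀ x, HasGradientAt f (f' x) x)
    (hlip : ∀ x y, ‖f' x - f' y‖ ≤ L * ‖x - y‖)
    (hbdd : BddBelow (f '' spSet n s))
    (hlam0 : 0 < lam) (hlamL : lam < 1 / L)
    (wstar : EuclideanSpace ℝ (Fin n)) (hws : wstar ∈ spSet n s)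
    (hsingleton : projSet (spSet n s) (wstar - lam • f' wstar) = {wstar})
    (U : Set (EuclideanSpace ℝ (Fin n))) (hU : IsOpen U) (hwU : wstar ∈ U)
    (hC2 : ContDiffOn ℝ 2 f U)
    (hHess : ∀ x ∈ U, HasFDerivAt f'
      (LinearMap.toContinuousLinearMap (Matrix.toEuclideanLin (Hess x))) x)
    (hHessLip : ∀ J : Finset (Fin n), J.card = s → wstar ∈ coordSub J →
      ∃ K : ℝ, ∀ u ∈ U ∩ coordSub J, ∀ v ∈ U ∩ coordSub J,
        ∀ i ∈ J, ∀ j ∈ J, |Hess u i j - Hess v i j| ≤ K * ‖u - v‖)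
    (hPD : ∀ J : Finset (Fin n), J.card = s → wstar ∈ coordSub J →
      (hessSub (Hess wstar) J).PosDef)
    (t : ℕ) (ht : 1 ≤ t) (N : ℕ)
    (w : ℕ → EuclideanSpace ℝ (Fin n))
    (winner : ℕ → ℕ → EuclideanSpace ℝ (Fin n))
    (Jsel : ℕ → Finset (Fin n))
    (hiter : ∀ k ≥ N,
      projSet (spSet n s) (w k) ⊆ U ∧
      winner k 0 ∈ projSet (spSet n s) (w k) ∧
      (Jsel k).card = s ∧ winner k 0 ∈ coordSub (Jsel k) ∧
      (∀ j < t, winner k (j + 1) = newtonStep f' Hess (Jsel k) (winner k j)) ∧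
      w (k + 1) ∈ projSet (spSet n s) (winner k t - lam • f' (winner k t)))
    (hconvg : Tendsto w atTop (𝓝 wstar)) :
    ∃ c > 0, ∃ N' : ℕ, ∀ k ≥ N', ‖w (k + 1) - wstar‖ ≤ c * ‖w k - wstar‖ ^ 2 := by
  classical
  -- projection lemma
  obtain ⟨ε, hε0, hproj⟩ := proj_lemma hs1 hsn hlam0 hws hsingleton
  -- uniform Newton constants over all relevant J
  have hJall : ∀ J : Finset (Fin n), ∃ r > 0, ∃ C > 0,
      (J.card = s → wstar ∈ coordSub J →
        Metric.ball wstar r ⊆ U ∧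
        ∀ x ∈ Metric.ball wstar r ∩ coordSub J,
          newtonStep f' Hess J x ∈ coordSub J ∧
          ‖newtonStep f' Hess J x - wstar‖ ≤ C * ‖x - wstar‖ ^ 2) := by
    intro J
    by_cases hgood : J.card = s ∧ wstar ∈ coordSub J
    · obtain ⟨K, hK⟩ := hHessLip J hgood.1 hgood.2
      have hK' : ∀ u ∈ U ∩ coordSub J, ∀ v ∈ U ∩ coordSub J,
          ∀ i ∈ J, ∀ j ∈ J, |Hess u i j - Hess v i j| ≤ (max K 0) * ‖u - v‖ := by
        intro u hu v hv i hi j hj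
        calc |Hess u i j - Hess v i j| ≤ K * ‖u - v‖ := hK u hu v hv i hi j hj
          _ ≤ (max K 0) * ‖u - v‖ := by
            have := le_max_left K 0
            nlinarith [norm_nonneg (u - v)]
      obtain ⟨r, hr, C, hC, hQ⟩ := newton_lemma hsn f' Hess U hU wstar hwU hHess J hgood.2
        (max K 0) (le_max_right _ _) hK' (hPD J hgood.1 hgood.2)
        (grad_zero hlam0 hsingleton hgood.1 hgood.2)
      exact ⟨r, hr, C, hC, fun _ _ => hQ⟩
    · exact ⟨1, one_pos, 1, one_pos, fun h1 h2 => absurd ⟨h1, h2⟩ hgood⟩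
  choose rf hrf Cf hCf hQ using hJall
  have hne : (Finset.univ : Finset (Finset (Fin n))).Nonempty := ⟨∅, Finset.mem_univ _⟩
  set r : ℝ := Finset.univ.inf' hne rf with hrdef
  set C : ℝ := Finset.univ.sup' hne Cf with hCdef
  have hr0 : 0 < r := by
    rw [hrdef, Finset.lt_inf'_iff]
    exact fun J _ => hrf J
  have hC0 : 0 < C := lt_of_lt_of_le (hCf ∅) (Finset.le_sup' Cf (Finset.mem_univ ∅))
  have hQ' : ∀ J : Finset (Fin n), J.card = s → wstar ∈ coordSub J →
      ∀ x ∈ Metric.ball wstar r ∩ coordSub J,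
        newtonStep f' Hess J x ∈ coordSub J ∧
        ‖newtonStep f' Hess J x - wstar‖ ≤ C * ‖x - wstar‖ ^ 2 := by
    intro J h1 h2 x hx
    have hsub : Metric.ball wstar r ⊆ Metric.ball wstar (rf J) :=
      Metric.ball_subset_ball (Finset.inf'_le rf (Finset.mem_univ J))
    obtain ⟨hmem, hbd⟩ := (hQ J h1 h2).2 x ⟨hsub hx.1, hx.2⟩
    refine ⟨hmem, le_trans hbd ?_⟩
    have hCle : Cf J ≤ C := Finset.le_sup' Cf (Finset.mem_univ J)
    nlinarith [sq_nonneg ‖x - wstar‖]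
  -- lower bound on nonzero coordinates of wstar
  obtain ⟨m, hm0, hmle⟩ : ∃ m > 0, ∀ i ∈ supp wstar, m ≤ |wstar i| := by
    rcases (supp wstar).eq_empty_or_nonempty with hS | hS
    · exact ⟨1, one_pos, fun i hi => by rw [hS] at hi; simp at hi⟩
    · obtain ⟨i₀, hi₀, hmin⟩ := (supp wstar).exists_min_image (fun i => |wstar i|) hS
      exact ⟨|wstar i₀|, abs_pos.2 (mem_supp.1 hi₀), hmin⟩
  -- choice of the closeness threshold δ
  have hlamL' : 0 < 1 + lam * L := by positivity
  set δ : ℝ := min (min (r / 3) (1 / (4 * C))) (min (m / 3) (ε / (2 * (1 + lam * L)))) with hδdef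
  have hδ0 : 0 < δ := by
    rw [hδdef]
    refine lt_min (lt_min (by positivity) (by positivity)) (lt_min (by positivity) (by positivity))
  have hδr : 2 * δ < r := by
    have := min_le_left (min (r / 3) (1 / (4 * C))) (min (m / 3) (ε / (2 * (1 + lam * L))))
    have h2 := min_le_left (r / 3) (1 / (4 * C))
    rw [hδdef]; nlinarith [hr0]
  have hδC : C * (2 * δ) ≤ 1 / 2 := by
    have h1 := min_le_left (min (r / 3) (1 / (4 * C))) (min (m / 3) (ε / (2 * (1 + lam * L))))
    have h2 := min_le_right (r / 3) (1 / (4 * C))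
    have h3 : δ ≤ 1 / (4 * C) := le_trans (by rw [hδdef]; exact h1) h2
    have h4 : δ * (4 * C) ≤ 1 := by rwa [le_div_iff₀ (by positivity)] at h3
    nlinarith
  have hδm : 2 * δ < m := by
    have h1 := min_le_right (min (r / 3) (1 / (4 * C))) (min (m / 3) (ε / (2 * (1 + lam * L))))
    have h2 := min_le_left (m / 3) (ε / (2 * (1 + lam * L)))
    rw [hδdef]; nlinarith [hm0]
  have hδε : (1 + lam * L) * (2 * δ) ≤ ε := by
    have h1 := min_le_right (min (r / 3) (1 / (4 * C))) (min (m / 3) (ε / (2 * (1 + lam * L))))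
    have h2 := min_le_right (m / 3) (ε / (2 * (1 + lam * L)))
    have h3 : δ ≤ ε / (2 * (1 + lam * L)) := le_trans (by rw [hδdef]; exact h1) h2
    rw [le_div_iff₀ (by positivity)] at h3
    nlinarith [hε0]
  -- eventual closeness
  obtain ⟨N1, hN1⟩ := Metric.tendsto_atTop.1 hconvg δ hδ0
  refine ⟨4 * C * (1 + lam * L), by positivity, max N N1, ?_⟩
  intro k hk
  have hkN : k ≥ N := le_trans (le_max_left _ _) hk
  have hkN1 : k ≥ N1 := le_trans (le_max_right _ _) hk
  obtain ⟨hU1, hw0, hJcard, hw0J, hnewt, hwk1⟩ := hiter k hkN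
  have hwkδ : ‖w k - wstar‖ < δ := by
    have := hN1 k hkN1; rwa [dist_eq_norm] at this
  set ρ : ℝ := 2 * ‖w k - wstar‖ with hρ
  have hρ0 : 0 ≤ ρ := by positivity
  have hw0close : ‖winner k 0 - wstar‖ ≤ ρ := proj_dist hw0 hws
  have hρδ : ρ < 2 * δ := by rw [hρ]; linarith
  -- wstar is supported inside Jsel k
  have hwJsel : wstar ∈ coordSub (Jsel k) := by
    intro i hi
    by_contra hne0
    have hiS : i ∈ supp wstar := mem_supp.2 hne0
    have h1 : winner k 0 i = 0 := hw0J i hi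
    have h2 : |(winner k 0 - wstar) i| ≤ ‖winner k 0 - wstar‖ :=
      coord_abs_le (winner k 0 - wstar) i
    have h3 : (winner k 0 - wstar) i = winner k 0 i - wstar i := by simp
    rw [h3, h1, zero_sub, abs_neg] at h2
    have h4 := hmle i hiS
    linarith
  -- invariant along the Newton iterations
  have hinvar : ∀ j, j ≤ t → winner k j ∈ coordSub (Jsel k) ∧ ‖winner k j - wstar‖ ≤ ρ := by
    intro j
    induction j with
    | zero => exact fun _ => ⟨hw0J, hw0close⟩
    | succ j ih =>
      intro hjt
      have hj : j < t := Nat.lt_of_succ_le hjt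
      obtain ⟨hcs, hcl⟩ := ih (le_of_lt hj)
      have hball : winner k j ∈ Metric.ball wstar r := by
        rw [Metric.mem_ball, dist_eq_norm]; linarith
      obtain ⟨hmem, hbd⟩ := hQ' (Jsel k) hJcard hwJsel (winner k j) ⟨hball, hcs⟩
      rw [← hnewt j hj] at hmem hbd
      refine ⟨hmem, ?_⟩
      have h1 : C * ρ ≤ 1 / 2 := by nlinarith
      nlinarith [norm_nonneg (winner k j - wstar), sq_nonneg ‖winner k j - wstar‖]
  -- quadratic bound at the last Newton step
  obtain ⟨t', ht'⟩ : ∃ t', t = t' + 1 := ⟨t - 1, (Nat.succ_pred_eq_of_pos ht).symm⟩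
  have hlast : ‖winner k t - wstar‖ ≤ C * ρ ^ 2 := by
    obtain ⟨hcs, hcl⟩ := hinvar t' (by omega)
    have hball : winner k t' ∈ Metric.ball wstar r := by
      rw [Metric.mem_ball, dist_eq_norm]; linarith
    obtain ⟨_, hbd⟩ := hQ' (Jsel k) hJcard hwJsel (winner k t') ⟨hball, hcs⟩
    rw [← hnewt t' (by omega), ← ht'] at hbd
    refine le_trans hbd ?_
    have h6 : ‖winner k t' - wstar‖ ^ 2 ≤ ρ ^ 2 := by
      nlinarith [norm_nonneg (winner k t' - wstar)]
    exact mul_le_mul_of_nonneg_left h6 (le_of_lt hC0)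
  have hsmall : ‖winner k t - wstar‖ ≤ ρ := (hinvar t le_rfl).2
  -- the projected gradient step
  set zk : E n := winner k t - lam • f' (winner k t) with hzk
  set zs : E n := wstar - lam • f' wstar with hzs
  have hzdiff : ‖zk - zs‖ ≤ (1 + lam * L) * ‖winner k t - wstar‖ := by
    have h1 : zk - zs = (winner k t - wstar) - lam • (f' (winner k t) - f' wstar) := by
      rw [hzk, hzs, smul_sub]; abel
    rw [h1]
    have h2 : ‖(winner k t - wstar) - lam • (f' (winner k t) - f' wstar)‖
        ≤ ‖winner k t - wstar‖ + ‖lam • (f' (winner k t) - f' wstar)‖ := norm_sub_le _ _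
    have h3 : ‖lam • (f' (winner k t) - f' wstar)‖
        = lam * ‖f' (winner k t) - f' wstar‖ := by
      rw [norm_smul, Real.norm_eq_abs, abs_of_pos hlam0]
    have h4 := hlip (winner k t) wstar
    have h5 : lam * ‖f' (winner k t) - f' wstar‖ ≤ lam * (L * ‖winner k t - wstar‖) := by
      nlinarith
    rw [h3] at h2
    nlinarith
  have hzε : ‖zk - zs‖ < ε := by
    calc ‖zk - zs‖ ≤ (1 + lam * L) * ‖winner k t - wstar‖ := hzdiff
      _ < (1 + lam * L) * (2 * δ) := by
          have : ‖winner k t - wstar‖ < 2 * δ := lt_of_le_of_lt hsmall hρδ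
          nlinarith
      _ ≤ ε := hδε
  have hfinal := hproj zk (w (k + 1)) hwk1 hzε
  calc ‖w (k + 1) - wstar‖ ≤ ‖zk - zs‖ := hfinal
    _ ≤ (1 + lam * L) * ‖winner k t - wstar‖ := hzdiff
    _ ≤ (1 + lam * L) * (C * ρ ^ 2) := by nlinarith
    _ = 4 * C * (1 + lam * L) * ‖w k - wstar‖ ^ 2 := by rw [hρ]; ring
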